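/- Let a ∈ ℝ^p be nonnegative with non-decreasing entries. Then the minimum of Σᵢ₌₁^p aᵢ(‖Bᵢ‖² + ‖Cᵢ‖²)/2 + ‖𝒜(BCᵀ) − b‖² over all B ∈ ℝ^{m×p}, C ∈ ℝ^{n×p} equals the minimum of Σᵢ aᵢσᵢ(X) + ‖𝒜X − b‖² over all X ∈ ℝ^{m×n} with rank(X) ≤ p. -/

import Mathlib

open Matrix BigOperators

/-- Singular values of a real matrix, in non-increasing order: the square roots
of the eigenvalues of XᴴX, sorted descending. -/
noncomputable def sv {m n : ℕ} (X : Matrix (Fin m) (Fin n) ℝ) : Fin n → ℝ :=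
  fun i =>
    Real.sqrt ((Matrix.isHermitian_conjTranspose_mul_self X).eigenvalues
      (Tuple.sort
        (fun j => -Real.sqrt ((Matrix.isHermitian_conjTranspose_mul_self X).eigenvalues j)) i))

/-- Singular values padded with zeros, indexed by ℕ. -/
noncomputable def svPad {m n : ℕ} (X : Matrix (Fin m) (Fin n) ℝ) (i : ℕ) : ℝ :=
  if h : i < n then sv X ⟨i, h⟩ else 0

namespace SVDAux

variable {m n : ℕ} (X : Matrix (Fin m) (Fin n) ℝ)

noncomputable def tau : Equiv.Perm (Fin n) :=
  Tuple.sort (fun j => -Real.sqrt ((Matrix.isHermitian_conjTranspose_mul_self X).eigenvalues j))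

noncomputable def w (i : Fin n) : Fin n → ℝ :=
  ⇑((Matrix.isHermitian_conjTranspose_mul_self X).eigenvectorBasis (tau X i))

lemma sv_eq (i : Fin n) :
    sv X i = Real.sqrt ((Matrix.isHermitian_conjTranspose_mul_self X).eigenvalues (tau X i)) := rfl

lemma sv_nonneg (i : Fin n) : 0 ≤ sv X i := Real.sqrt_nonneg _

lemma sv_sq (i : Fin n) :
    sv X i ^ 2 = (Matrix.isHermitian_conjTranspose_mul_self X).eigenvalues (tau X i) :=
  Real.sq_sqrt (Matrix.eigenvalues_conjTranspose_mul_self_nonneg X _)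

lemma sv_antitone : Antitone (sv X) := by
  have h := Tuple.monotone_sort
    (fun j => -Real.sqrt ((Matrix.isHermitian_conjTranspose_mul_self X).eigenvalues j))
  intro i j hij
  have := h hij
  simp only [Function.comp_apply] at this
  have : -(sv X i) ≤ -(sv X j) := this
  linarith

lemma H_mulVec (i : Fin n) : (Xᴴ * X) *ᵥ w X i = (sv X i ^ 2) • w X i := by
  rw [sv_sq]
  exact (Matrix.isHermitian_conjTranspose_mul_self X).mulVec_eigenvectorBasis (tau X i)

lemma w_dot (i j : Fin n) : w X i ⬝ᵥ w X j = if i = j then 1 else 0 := by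
  have h := (Matrix.isHermitian_conjTranspose_mul_self X).eigenvectorBasis.orthonormal
  rw [orthonormal_iff_ite] at h
  have h2 := h (tau X i) (tau X j)
  rw [PiLp.inner_apply] at h2
  simp only [RCLike.inner_apply, starRingEnd_apply, star_trivial] at h2
  rw [dotProduct]
  rw [show ((if tau X i = tau X j then (1:ℝ) else 0) = if i = j then 1 else 0) by
    simp [Equiv.apply_eq_iff_eq]] at h2
  exact Eq.trans (Finset.sum_congr rfl fun x _ => mul_comm _ _) h2

lemma Xw_dot (i j : Fin n) :
    (X *ᵥ w X i) ⬝ᵥ (X *ᵥ w X j) = if i = j then sv X i ^ 2 else 0 := by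
  have key : (X *ᵥ w X i) ⬝ᵥ (X *ᵥ w X j) = w X i ⬝ᵥ ((Xᴴ * X) *ᵥ w X j) := by
    rw [Matrix.conjTranspose_eq_transpose_of_trivial, ← Matrix.mulVec_mulVec,
      Matrix.mulVec_transpose, dotProduct_comm, Matrix.dotProduct_mulVec, dotProduct_comm]
  rw [key, H_mulVec, dotProduct_smul, smul_eq_mul, w_dot]
  split <;> simp_all

lemma dot_sum {α : Type*} [Fintype α] {ι : Type*} (t : Finset ι) (v : α → ℝ) (f : ι → α → ℝ) :
    v ⬝ᵥ (∑ i ∈ t, f i) = ∑ i ∈ t, v ⬝ᵥ f i := by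
  simp only [dotProduct, Finset.sum_apply, Finset.mul_sum]
  rw [Finset.sum_comm]

lemma mulVec_sum' {α β : Type*} [Fintype α] [Fintype β] {ι : Type*} (t : Finset ι)
    (A : Matrix β α ℝ) (f : ι → α → ℝ) :
    A *ᵥ (∑ i ∈ t, f i) = ∑ i ∈ t, A *ᵥ f i := by
  funext x
  simp only [Matrix.mulVec, dotProduct, Finset.sum_apply, Finset.mul_sum]
  rw [Finset.sum_comm]

lemma dot_key (a b : Fin n → ℝ) :
    (X *ᵥ a) ⬝ᵥ (X *ᵥ b) = a ⬝ᵥ ((Xᴴ * X) *ᵥ b) := by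
  rw [Matrix.conjTranspose_eq_transpose_of_trivial, ← Matrix.mulVec_mulVec,
    Matrix.mulVec_transpose, dotProduct_comm, Matrix.dotProduct_mulVec,
    dotProduct_comm]

lemma sum_w_outer (x y : Fin n) :
    ∑ i, w X i x * w X i y = if x = y then 1 else 0 := by
  classical
  set hX := Matrix.isHermitian_conjTranspose_mul_self X with hhX
  have hmem := hX.eigenvectorUnitary.2
  rw [Matrix.mem_unitaryGroup_iff] at hmem
  have h1 := congrFun (congrFun hmem x) y
  rw [Matrix.mul_apply, Matrix.one_apply] at h1
  have h2 : ∀ j : Fin n, (hX.eigenvectorUnitary : Matrix (Fin n) (Fin n) ℝ) x j *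
      star (hX.eigenvectorUnitary : Matrix (Fin n) (Fin n) ℝ) j y
      = hX.eigenvectorBasis j x * hX.eigenvectorBasis j y := by
    intro j
    rw [Matrix.star_apply, hX.eigenvectorUnitary_apply, hX.eigenvectorUnitary_apply,
      star_trivial]
  rw [Finset.sum_congr rfl (fun j _ => h2 j)] at h1
  rw [show (∑ i, w X i x * w X i y)
    = ∑ j, hX.eigenvectorBasis j x * hX.eigenvectorBasis j y from
    Equiv.sum_comp (tau X) (fun j => hX.eigenvectorBasis j x * hX.eigenvectorBasis j y)]
  exact h1

lemma v_expand (v : Fin n → ℝ) (x : Fin n) :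
    v x = ∑ i, (w X i ⬝ᵥ v) * w X i x := by
  have : ∑ i, (w X i ⬝ᵥ v) * w X i x = ∑ i, ∑ y, v y * (w X i y * w X i x) := by
    refine Finset.sum_congr rfl fun i _ => ?_
    rw [dotProduct, Finset.sum_mul]
    exact Finset.sum_congr rfl fun y _ => by ring
  rw [this, Finset.sum_comm]
  have : ∀ y, ∑ i, v y * (w X i y * w X i x) = v y * if y = x then 1 else 0 := by
    intro y
    rw [← Finset.mul_sum, sum_w_outer]
  rw [Finset.sum_congr rfl (fun y _ => this y)]
  simp

lemma parseval (v : Fin n → ℝ) : ∑ i, (w X i ⬝ᵥ v) ^ 2 = v ⬝ᵥ v := by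
  have h : ∀ x, v x = ∑ i, (w X i ⬝ᵥ v) * w X i x := v_expand X v
  calc ∑ i, (w X i ⬝ᵥ v) ^ 2 = ∑ i, (w X i ⬝ᵥ v) * (w X i ⬝ᵥ v) := by
        refine Finset.sum_congr rfl fun i _ => sq (w X i ⬝ᵥ v) ▸ by ring
    _ = ∑ i, ∑ x, (w X i ⬝ᵥ v) * (w X i x * v x) := by
        refine Finset.sum_congr rfl fun i _ => ?_
        rw [dotProduct, Finset.mul_sum]
    _ = v ⬝ᵥ v := by
        rw [Finset.sum_comm, dotProduct]
        refine Finset.sum_congr rfl fun x _ => ?_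
        have : ∑ i, (w X i ⬝ᵥ v) * (w X i x * v x)
            = (∑ i, (w X i ⬝ᵥ v) * w X i x) * v x := by
          rw [Finset.sum_mul]
          exact Finset.sum_congr rfl fun i _ => by ring
        rw [this, ← h x]

lemma normXv (v : Fin n → ℝ) :
    (X *ᵥ v) ⬝ᵥ (X *ᵥ v) = ∑ i, sv X i ^ 2 * (w X i ⬝ᵥ v) ^ 2 := by
  rw [dot_key]
  have hv : v = ∑ i, (w X i ⬝ᵥ v) • w X i := by
    funext x
    rw [Finset.sum_apply]
    exact v_expand X v x
  have hH : (Xᴴ * X) *ᵥ v = ∑ i, ((w X i ⬝ᵥ v) * sv X i ^ 2) • w X i := by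
    conv_lhs => rw [hv]
    rw [mulVec_sum']
    refine Finset.sum_congr rfl fun i _ => ?_
    rw [Matrix.mulVec_smul, H_mulVec, smul_smul]
  rw [hH, dot_sum]
  refine Finset.sum_congr rfl fun i _ => ?_
  rw [dotProduct_smul, smul_eq_mul, dotProduct_comm]
  ring

lemma recon (x : Fin m) (y : Fin n) :
    X x y = ∑ i, (X *ᵥ w X i) x * w X i y := by
  have : ∀ i : Fin n, (X *ᵥ w X i) x * w X i y = ∑ z, X x z * (w X i z * w X i y) := by
    intro i
    rw [Matrix.mulVec, dotProduct, Finset.sum_mul]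
    exact Finset.sum_congr rfl fun z _ => by ring
  rw [Finset.sum_congr rfl (fun i _ => this i), Finset.sum_comm]
  have : ∀ z, ∑ i, X x z * (w X i z * w X i y) = X x z * if z = y then 1 else 0 := fun z => by
    rw [← Finset.mul_sum, sum_w_outer]
  rw [Finset.sum_congr rfl (fun z _ => this z)]
  simp

lemma Xw_eq_zero (i : Fin n) (h : sv X i = 0) : X *ᵥ w X i = 0 := by
  have h2 := Xw_dot X i i
  rw [if_pos rfl, h] at h2
  norm_num [dotProduct_self_eq_zero] at h2
  exact h2

lemma sv_eq_zero_of_rank {k : ℕ} (hr : X.rank ≤ k) (i : Fin n) (hk : k ≤ (i : ℕ)) :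
    sv X i = 0 := by
  classical
  by_contra hne
  set hX := Matrix.isHermitian_conjTranspose_mul_self X with hhX
  have hpos : ∀ j : Fin n, j ≤ i → sv X j ≠ 0 := by
    intro j hj
    have := sv_antitone X hj
    have h0 := sv_nonneg X i
    intro h
    rw [h] at this
    exact hne (le_antisymm this h0)
  have hsub : Finset.univ.filter (fun j : Fin n => j ≤ i)
      ⊆ Finset.univ.filter (fun j : Fin n => sv X j ≠ 0) := by
    intro j hj
    simp only [Finset.mem_filter, Finset.mem_univ, true_and] at hj ⊢
    exact hpos j hj
  have hcard1 : (Finset.univ.filter (fun j : Fin n => j ≤ i)).card = (i : ℕ) + 1 := by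
    rw [show Finset.univ.filter (fun j : Fin n => j ≤ i) = Finset.Iic i by ext j; simp]
    simp
  have heig : (Finset.univ.filter (fun j : Fin n => sv X j ≠ 0)).card
      = (Finset.univ.filter (fun j : Fin n => hX.eigenvalues j ≠ 0)).card := by
    apply Finset.card_bij (fun j _ => tau X j)
    · intro j hj
      simp only [Finset.mem_filter, Finset.mem_univ, true_and] at hj ⊢
      intro h0
      exact hj (by rw [sv_eq, h0, Real.sqrt_zero])
    · intro j₁ _ j₂ _ h
      exact (tau X).injective h
    · intro j hj
      simp only [Finset.mem_filter, Finset.mem_univ, true_and] at hj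
      refine ⟨(tau X).symm j, ?_, by simp⟩
      simp only [Finset.mem_filter, Finset.mem_univ, true_and]
      rw [sv_eq, Equiv.apply_symm_apply]
      intro h
      have hnn := Matrix.eigenvalues_conjTranspose_mul_self_nonneg X j
      exact hj (le_antisymm (by
        by_contra hlt
        push_neg at hlt
        exact absurd h (ne_of_gt (Real.sqrt_pos.mpr hlt))) hnn)
  have hrank : (Finset.univ.filter (fun j : Fin n => hX.eigenvalues j ≠ 0)).card = X.rank := by
    rw [← Matrix.rank_conjTranspose_mul_self X, hX.rank_eq_card_non_zero_eigs,
      Fintype.card_subtype]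
  have := Finset.card_le_card hsub
  rw [hcard1, heig, hrank] at this
  omega

noncomputable def u (i : Fin n) : Fin m → ℝ :=
  if sv X i = 0 then 0 else (sv X i)⁻¹ • (X *ᵥ w X i)

lemma Xw_eq_smul_u (i : Fin n) : X *ᵥ w X i = sv X i • u X i := by
  by_cases h : sv X i = 0
  · rw [Xw_eq_zero X i h, h, zero_smul]
  · rw [u, if_neg h, smul_smul, mul_inv_cancel₀ h, one_smul]

lemma u_dot_u (i j : Fin n) :
    u X i ⬝ᵥ u X j = if i = j ∧ sv X i ≠ 0 then 1 else 0 := by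
  by_cases hi : sv X i = 0
  · rw [u, if_pos hi]
    simp [hi]
  · by_cases hj : sv X j = 0
    · have hij : i ≠ j := fun h => hi (h ▸ hj)
      rw [u, u, if_neg hi, if_pos hj, dotProduct_zero, if_neg (by tauto)]
    · rw [u, u, if_neg hi, if_neg hj, smul_dotProduct, dotProduct_smul,
        Xw_dot, smul_eq_mul, smul_eq_mul]
      by_cases hij : i = j
      · subst hij
        rw [if_pos rfl, if_pos ⟨rfl, hi⟩]
        field_simp
      · rw [if_neg hij, if_neg (by tauto)]
        ring

lemma u_dot_self_le_one (i : Fin n) : u X i ⬝ᵥ u X i ≤ 1 := by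
  rw [u_dot_u]
  split <;> norm_num

lemma u_dot_Xw (i : Fin n) : u X i ⬝ᵥ (X *ᵥ w X i) = sv X i := by
  rw [Xw_eq_smul_u, dotProduct_smul, smul_eq_mul, u_dot_u]
  by_cases h : sv X i = 0
  · rw [h]; ring
  · rw [if_pos ⟨rfl, h⟩]; ring

lemma w_dot_self (i : Fin n) : w X i ⬝ᵥ w X i = 1 := by
  rw [w_dot, if_pos rfl]

section Factor

variable {p : ℕ}

/-- The SVD-based factorization for direction 1. -/
lemma sum_range_ext {M : Type*} [AddCommMonoid M] (p n : ℕ) (F : ℕ → M)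
    (h1 : ∀ k, p ≤ k → F k = 0) (h2 : ∀ k, n ≤ k → F k = 0) :
    ∑ k ∈ Finset.range p, F k = ∑ k ∈ Finset.range n, F k := by
  rcases le_total p n with h | h
  · exact Finset.sum_subset (Finset.range_subset_range.mpr h)
      (fun x hx hnx => h1 x (by simp only [Finset.mem_range, not_lt] at hnx; exact hnx))
  · exact (Finset.sum_subset (Finset.range_subset_range.mpr h)
      (fun x hx hnx => h2 x (by simp only [Finset.mem_range, not_lt] at hnx; exact hnx))).symm

lemma exists_factorization (hr : X.rank ≤ p) :
    ∃ (B : Matrix (Fin m) (Fin p) ℝ) (C : Matrix (Fin n) (Fin p) ℝ),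
      B * Cᵀ = X ∧ (∀ i : Fin p, ∑ j, B j i ^ 2 = svPad X (i : ℕ)) ∧
      (∀ i : Fin p, ∑ j, C j i ^ 2 = svPad X (i : ℕ)) := by
  classical
  refine ⟨fun j i => if h : (i : ℕ) < n then Real.sqrt (sv X ⟨i, h⟩) * u X ⟨i, h⟩ j else 0,
    fun j i => if h : (i : ℕ) < n then Real.sqrt (sv X ⟨i, h⟩) * w X ⟨i, h⟩ j else 0, ?_, ?_, ?_⟩
  · funext x y
    refine Matrix.mul_apply.trans ?_
    show ∑ i : Fin p, (if h : (i : ℕ) < n then Real.sqrt (sv X ⟨i, h⟩) * u X ⟨i, h⟩ x else 0) *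
      (if h : (i : ℕ) < n then Real.sqrt (sv X ⟨i, h⟩) * w X ⟨i, h⟩ y else 0) = X x y
    set F : ℕ → ℝ :=
      fun k => if h : k < n then (X *ᵥ w X ⟨k, h⟩) x * w X ⟨k, h⟩ y else 0 with hF
    have hterm : ∀ i : Fin p,
        (if h : (i : ℕ) < n then Real.sqrt (sv X ⟨i, h⟩) * u X ⟨i, h⟩ x else 0) *
        (if h : (i : ℕ) < n then Real.sqrt (sv X ⟨i, h⟩) * w X ⟨i, h⟩ y else 0)
        = F (i : ℕ) := by
      intro i
      simp only [hF]
      by_cases h : (i : ℕ) < n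
      · rw [dif_pos h, dif_pos h, dif_pos h, Xw_eq_smul_u]
        have : Real.sqrt (sv X ⟨i, h⟩) * Real.sqrt (sv X ⟨i, h⟩) = sv X ⟨i, h⟩ :=
          Real.mul_self_sqrt (sv_nonneg X _)
        simp only [Pi.smul_apply, smul_eq_mul]
        linear_combination (u X ⟨(i : ℕ), h⟩ x * w X ⟨(i : ℕ), h⟩ y) * this
      · rw [dif_neg h, dif_neg h, dif_neg h, zero_mul]
    rw [Finset.sum_congr rfl fun i _ => hterm i, Fin.sum_univ_eq_sum_range F p, recon X x y]
    have hterm2 : ∀ i : Fin n, (X *ᵥ w X i) x * w X i y = F (i : ℕ) := by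
      intro i
      simp only [hF]
      simp only [dif_pos i.isLt, Fin.eta]
    rw [Finset.sum_congr rfl fun i _ => hterm2 i, Fin.sum_univ_eq_sum_range F n]
    apply sum_range_ext
    · intro k hk
      simp only [hF]
      by_cases h : k < n
      · rw [dif_pos h, Xw_eq_zero X ⟨k, h⟩ (sv_eq_zero_of_rank X hr ⟨k, h⟩ hk)]
        simp
      · rw [dif_neg h]
    · intro k hk
      simp only [hF]
      rw [dif_neg (by omega)]
  · intro i
    by_cases h : (i : ℕ) < n
    · simp only [dif_pos h]
      have : ∀ j, (Real.sqrt (sv X ⟨i, h⟩) * u X ⟨i, h⟩ j) ^ 2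
          = sv X ⟨i, h⟩ * (u X ⟨i, h⟩ j * u X ⟨i, h⟩ j) := by
        intro j
        rw [mul_pow, Real.sq_sqrt (sv_nonneg X _)]
        ring
      rw [Finset.sum_congr rfl fun j _ => this j, ← Finset.mul_sum]
      rw [show ∑ j, u X ⟨i, h⟩ j * u X ⟨i, h⟩ j = u X ⟨i, h⟩ ⬝ᵥ u X ⟨i, h⟩ from rfl, u_dot_u]
      rw [svPad, dif_pos h]
      by_cases hz : sv X ⟨i, h⟩ = 0
      · rw [hz]; simp
      · rw [if_pos ⟨rfl, hz⟩, mul_one]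
    · simp only [dif_neg h]
      rw [svPad, dif_neg h]
      simp
  · intro i
    by_cases h : (i : ℕ) < n
    · simp only [dif_pos h]
      have : ∀ j, (Real.sqrt (sv X ⟨i, h⟩) * w X ⟨i, h⟩ j) ^ 2
          = sv X ⟨i, h⟩ * (w X ⟨i, h⟩ j * w X ⟨i, h⟩ j) := by
        intro j
        rw [mul_pow, Real.sq_sqrt (sv_nonneg X _)]
        ring
      rw [Finset.sum_congr rfl fun j _ => this j, ← Finset.mul_sum]
      rw [show ∑ j, w X ⟨i, h⟩ j * w X ⟨i, h⟩ j = w X ⟨i, h⟩ ⬝ᵥ w X ⟨i, h⟩ from rfl,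
        w_dot_self, mul_one, svPad, dif_pos h]
    · simp only [dif_neg h]
      rw [svPad, dif_neg h]
      simp

end Factor

section Bessel

lemma bessel {μ : ℕ} {ι : Type*} (t : Finset ι) (v : ι → Fin μ → ℝ)
    (horth : ∀ i ∈ t, ∀ j ∈ t, i ≠ j → v i ⬝ᵥ v j = 0)
    (hnorm : ∀ i ∈ t, v i ⬝ᵥ v i ≤ 1) (x : Fin μ → ℝ) :
    ∑ i ∈ t, (v i ⬝ᵥ x) ^ 2 ≤ x ⬝ᵥ x := by
  classical
  set s : Fin μ → ℝ := ∑ i ∈ t, (v i ⬝ᵥ x) • v i with hs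
  have hxs : x ⬝ᵥ s = ∑ i ∈ t, (v i ⬝ᵥ x) ^ 2 := by
    rw [hs, dot_sum]
    refine Finset.sum_congr rfl fun i _ => ?_
    rw [dotProduct_smul, smul_eq_mul, dotProduct_comm]
    ring
  have sum_dot : ∀ (f : ι → Fin μ → ℝ) (z : Fin μ → ℝ),
      (∑ i ∈ t, f i) ⬝ᵥ z = ∑ i ∈ t, f i ⬝ᵥ z := by
    intro f z
    rw [dotProduct_comm, dot_sum]
    exact Finset.sum_congr rfl fun i _ => dotProduct_comm z (f i)
  have hss : s ⬝ᵥ s ≤ ∑ i ∈ t, (v i ⬝ᵥ x) ^ 2 := by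
    rw [hs, dot_sum]
    have : ∀ i ∈ t, (∑ j ∈ t, (v j ⬝ᵥ x) • v j) ⬝ᵥ ((v i ⬝ᵥ x) • v i)
        ≤ (v i ⬝ᵥ x) ^ 2 := by
      intro i hi
      rw [dotProduct_smul, smul_eq_mul, sum_dot, Finset.mul_sum]
      have : ∀ j ∈ t, (v i ⬝ᵥ x) * ((v j ⬝ᵥ x) • v j ⬝ᵥ v i)
          ≤ (if j = i then (v i ⬝ᵥ x) ^ 2 * (v i ⬝ᵥ v i) else 0) := by
        intro j hj
        by_cases hij : j = i
        · subst hij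
          rw [if_pos rfl, smul_dotProduct, smul_eq_mul]
          have : (v j ⬝ᵥ x) * ((v j ⬝ᵥ x) * (v j ⬝ᵥ v j)) = (v j ⬝ᵥ x) ^ 2 * (v j ⬝ᵥ v j) := by
            ring
          rw [this]
        · rw [smul_dotProduct, smul_eq_mul, horth j hj i hi hij, if_neg hij]
          simp
      refine le_trans (Finset.sum_le_sum this) ?_
      rw [Finset.sum_ite_eq' t i (fun _ => (v i ⬝ᵥ x) ^ 2 * (v i ⬝ᵥ v i)), if_pos hi]
      calc (v i ⬝ᵥ x) ^ 2 * (v i ⬝ᵥ v i) ≤ (v i ⬝ᵥ x) ^ 2 * 1 :=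
            mul_le_mul_of_nonneg_left (hnorm i hi) (sq_nonneg _)
        _ = (v i ⬝ᵥ x) ^ 2 := mul_one _
    exact Finset.sum_le_sum this
  have hrr : (0:ℝ) ≤ (x - s) ⬝ᵥ (x - s) :=
    Finset.sum_nonneg fun i _ => mul_self_nonneg _
  rw [sub_dotProduct, dotProduct_sub, dotProduct_sub] at hrr
  have hsx : s ⬝ᵥ x = x ⬝ᵥ s := dotProduct_comm s x
  linarith

lemma cs_sqrt {ι : Type*} (t : Finset ι) (f g : ι → ℝ) :
    ∑ i ∈ t, f i * g i ≤ Real.sqrt (∑ i ∈ t, f i ^ 2) * Real.sqrt (∑ i ∈ t, g i ^ 2) := by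
  have h := Finset.sum_mul_sq_le_sq_mul_sq t f g
  have h2 : ∑ i ∈ t, f i * g i ≤ |∑ i ∈ t, f i * g i| := le_abs_self _
  refine h2.trans ?_
  rw [← Real.sqrt_sq_eq_abs, ← Real.sqrt_mul (Finset.sum_nonneg fun i _ => sq_nonneg (f i))]
  exact Real.sqrt_le_sqrt h

lemma sqrt_mul_sqrt_le_half {x y : ℝ} (hx : 0 ≤ x) (hy : 0 ≤ y) :
    Real.sqrt x * Real.sqrt y ≤ (x + y) / 2 := by
  nlinarith [Real.sq_sqrt hx, Real.sq_sqrt hy, sq_nonneg (Real.sqrt x - Real.sqrt y),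
    Real.sqrt_nonneg x, Real.sqrt_nonneg y]

end Bessel

section Nuclear

variable {p : ℕ}

/-- The nuclear norm of `B * Cᵀ` is at most the sum of the average squared column norms. -/
lemma nuclear_le_cols (B : Matrix (Fin m) (Fin p) ℝ) (C : Matrix (Fin n) (Fin p) ℝ) :
    ∑ i, sv (B * Cᵀ) i ≤
      ∑ j : Fin p, ((∑ k, B k j ^ 2) + ∑ k, C k j ^ 2) / 2 := by
  classical
  set M := B * Cᵀ with hM
  have expand : ∀ i : Fin n,
      sv M i = ∑ j : Fin p, (u M i ⬝ᵥ (fun k => B k j)) * ((fun k => C k j) ⬝ᵥ w M i) := by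
    intro i
    rw [← u_dot_Xw M i]
    have h1 : M *ᵥ w M i = B *ᵥ (Cᵀ *ᵥ w M i) := by rw [hM, ← Matrix.mulVec_mulVec]
    rw [h1, Matrix.dotProduct_mulVec]
    refine Finset.sum_congr rfl fun j _ => ?_
    show (u M i ᵥ* B) j * (Cᵀ *ᵥ w M i) j = _
    have h2 : (u M i ᵥ* B) j = u M i ⬝ᵥ (fun k => B k j) := rfl
    have h3 : (Cᵀ *ᵥ w M i) j = (fun k => C k j) ⬝ᵥ w M i := rfl
    rw [h2, h3]
  rw [Finset.sum_congr rfl fun i _ => expand i, Finset.sum_comm]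
  refine Finset.sum_le_sum fun j _ => ?_
  have hcs := cs_sqrt (Finset.univ : Finset (Fin n))
    (fun i => u M i ⬝ᵥ (fun k => B k j)) (fun i => (fun k => C k j) ⬝ᵥ w M i)
  refine hcs.trans ?_
  have hb : ∑ i : Fin n, (u M i ⬝ᵥ (fun k => B k j)) ^ 2 ≤ ∑ k, B k j ^ 2 := by
    have := bessel (Finset.univ : Finset (Fin n)) (u M)
      (fun i _ l _ hil => by rw [u_dot_u, if_neg (by tauto)])
      (fun i _ => u_dot_self_le_one M i) (fun k => B k j)
    refine this.trans_eq ?_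
    rw [dotProduct]
    exact Finset.sum_congr rfl fun k _ => (sq (B k j)).symm
  have hc : ∑ i : Fin n, ((fun k => C k j) ⬝ᵥ w M i) ^ 2 ≤ ∑ k, C k j ^ 2 := by
    have heq : ∀ i : Fin n, ((fun k => C k j) ⬝ᵥ w M i) ^ 2 = (w M i ⬝ᵥ (fun k => C k j)) ^ 2 :=
      fun i => by rw [dotProduct_comm]
    rw [Finset.sum_congr rfl fun i _ => heq i]
    have := bessel (Finset.univ : Finset (Fin n)) (w M)
      (fun i _ l _ hil => by rw [w_dot, if_neg hil])
      (fun i _ => le_of_eq (w_dot_self M i)) (fun k => C k j)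
    refine this.trans_eq ?_
    rw [dotProduct]
    exact Finset.sum_congr rfl fun k _ => (sq (C k j)).symm
  have hbn : (0:ℝ) ≤ ∑ k, B k j ^ 2 := Finset.sum_nonneg fun k _ => sq_nonneg _
  have hcn : (0:ℝ) ≤ ∑ k, C k j ^ 2 := Finset.sum_nonneg fun k _ => sq_nonneg _
  calc Real.sqrt (∑ i : Fin n, (u M i ⬝ᵥ (fun k => B k j)) ^ 2) *
        Real.sqrt (∑ i : Fin n, ((fun k => C k j) ⬝ᵥ w M i) ^ 2)
      ≤ Real.sqrt (∑ k, B k j ^ 2) * Real.sqrt (∑ k, C k j ^ 2) := by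
        apply mul_le_mul (Real.sqrt_le_sqrt hb) (Real.sqrt_le_sqrt hc)
          (Real.sqrt_nonneg _) (Real.sqrt_nonneg _)
    _ ≤ ((∑ k, B k j ^ 2) + ∑ k, C k j ^ 2) / 2 := sqrt_mul_sqrt_le_half hbn hcn

end Nuclear

section CF

lemma w_linearIndependent : LinearIndependent ℝ (w X) := by
  rw [linearIndependent_iff']
  intro s g hg i hi
  have := congrArg (fun v => w X i ⬝ᵥ v) hg
  rw [dot_sum] at this
  have h2 : ∀ j ∈ s, w X i ⬝ᵥ (g j • w X j) = if j = i then g i else 0 := by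
    intro j hj
    rw [dotProduct_smul, smul_eq_mul, w_dot]
    by_cases hij : j = i
    · subst hij; rw [if_pos rfl, if_pos rfl, mul_one]
    · rw [if_neg (fun h => hij h.symm), if_neg hij, mul_zero]
  rw [Finset.sum_congr rfl h2, Finset.sum_ite_eq' s i (fun _ => g i), if_pos hi] at this
  rw [this]
  exact (dotProduct_zero _)

lemma finrank_span_w (S : Finset (Fin n)) :
    Module.finrank ℝ (Submodule.span ℝ (w X '' (S : Set (Fin n)))) = S.card := by
  classical
  have hli : LinearIndependent ℝ (fun i : {x // x ∈ S} => w X i) :=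
    (w_linearIndependent X).comp Subtype.val Subtype.val_injective
  have himg : Set.range (fun i : {x // x ∈ S} => w X i) = w X '' (S : Set (Fin n)) := by
    ext v
    simp [Set.mem_image, Set.mem_range]
  rw [← himg, finrank_span_eq_card hli, Fintype.card_coe]

lemma dot_zero_of_mem_span (SS : Set (Fin n)) (j : Fin n) (hj : j ∉ SS)
    (v : Fin n → ℝ) (hv : v ∈ Submodule.span ℝ (w X '' SS)) :
    w X j ⬝ᵥ v = 0 := by
  induction hv using Submodule.span_induction with
  | mem x hx =>
    obtain ⟨l, hl, rfl⟩ := hx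
    rw [w_dot, if_neg (by rintro rfl; exact hj hl)]
  | zero => exact dotProduct_zero _
  | add x y _ _ hx hy => rw [dotProduct_add, hx, hy, add_zero]
  | smul c x _ hx => rw [dotProduct_smul, hx, smul_zero]

lemma quad_ge_on_span (i : Fin n) (v : Fin n → ℝ)
    (hv : v ∈ Submodule.span ℝ (w X '' {l : Fin n | l ≤ i})) :
    sv X i ^ 2 * (v ⬝ᵥ v) ≤ (X *ᵥ v) ⬝ᵥ (X *ᵥ v) := by
  rw [normXv, ← parseval X v, Finset.mul_sum]
  refine Finset.sum_le_sum fun l _ => ?_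
  by_cases hl : l ≤ i
  · have h1 : sv X i ≤ sv X l := sv_antitone X hl
    have h2 : 0 ≤ sv X i := sv_nonneg X i
    have h3 : sv X i ^ 2 ≤ sv X l ^ 2 := by nlinarith
    exact mul_le_mul_of_nonneg_right h3 (sq_nonneg _)
  · rw [dot_zero_of_mem_span X _ l hl v hv]
    simp

lemma quad_le_on_span (Y : Matrix (Fin m) (Fin n) ℝ) (i : Fin n) (v : Fin n → ℝ)
    (hv : v ∈ Submodule.span ℝ (w Y '' {l : Fin n | i ≤ l})) :
    (Y *ᵥ v) ⬝ᵥ (Y *ᵥ v) ≤ sv Y i ^ 2 * (v ⬝ᵥ v) := by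
  rw [normXv, ← parseval Y v, Finset.mul_sum]
  refine Finset.sum_le_sum fun l _ => ?_
  by_cases hl : i ≤ l
  · have h1 : sv Y l ≤ sv Y i := sv_antitone Y hl
    have h2 : 0 ≤ sv Y l := sv_nonneg Y l
    have h3 : sv Y l ^ 2 ≤ sv Y i ^ 2 := by nlinarith
    exact mul_le_mul_of_nonneg_right h3 (sq_nonneg _)
  · rw [dot_zero_of_mem_span Y _ l hl v hv]
    simp

/-- Courant-Fischer style lower bound for singular values. -/
lemma le_sv_of_subspace (W : Matrix (Fin m) (Fin n) ℝ) (i : Fin n) (c : ℝ) (hc : 0 ≤ c)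
    (U : Submodule ℝ (Fin n → ℝ)) (hdim : (i : ℕ) + 1 ≤ Module.finrank ℝ U)
    (hU : ∀ v ∈ U, c ^ 2 * (v ⬝ᵥ v) ≤ (W *ᵥ v) ⬝ᵥ (W *ᵥ v)) :
    c ≤ sv W i := by
  classical
  by_contra hlt
  push_neg at hlt
  set E := Submodule.span ℝ (w W '' {l : Fin n | i ≤ l}) with hE
  have hEdim : Module.finrank ℝ E = n - (i : ℕ) := by
    rw [hE, show {l : Fin n | i ≤ l} = ((Finset.univ.filter (fun l : Fin n => i ≤ l) : Finset (Fin n)) : Set (Fin n)) by ext l; simp,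
      finrank_span_w]
    rw [show Finset.univ.filter (fun l : Fin n => i ≤ l) = Finset.Ici i by ext l; simp]
    exact Fin.card_Ici i
  have htot : Module.finrank ℝ ↥(U ⊔ E) ≤ n := by
    have h := Submodule.finrank_le (U ⊔ E)
    rwa [Module.finrank_fintype_fun_eq_card, Fintype.card_fin] at h
  have hsum := Submodule.finrank_sup_add_finrank_inf_eq U E
  have hUE : 0 < Module.finrank ℝ ↥(U ⊓ E) := by
    have : (i : ℕ) < n := i.isLt
    omega
  have hne : U ⊓ E ≠ ⊥ := by
    intro h
    rw [h, finrank_bot] at hUE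
    exact lt_irrefl 0 hUE
  obtain ⟨v, hvUE, hv0⟩ := (Submodule.ne_bot_iff (U ⊓ E)).mp hne
  have hvU : v ∈ U := hvUE.1
  have hvE : v ∈ E := hvUE.2
  have hvv : 0 < v ⬝ᵥ v := by
    rcases lt_or_eq_of_le (Finset.sum_nonneg fun k _ => mul_self_nonneg (v k) :
      (0:ℝ) ≤ v ⬝ᵥ v) with h | h
    · exact h
    · exact absurd (dotProduct_self_eq_zero.mp h.symm) hv0
  have h1 := hU v hvU
  have h2 := quad_le_on_span W i v hvE
  have h3 : sv W i ^ 2 < c ^ 2 := by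
    have := sv_nonneg W i
    nlinarith
  nlinarith

/-- Weyl-type inequality: if `Z` has rank at most `k` then the `(j+k)`-th singular
value of `X` is at most the `j`-th singular value of `X - Z`. -/
lemma sv_shift_le (Z : Matrix (Fin m) (Fin n) ℝ) (k : ℕ) (hZ : Z.rank ≤ k)
    (i j : Fin n) (hij : (i : ℕ) = (j : ℕ) + k) :
    sv X i ≤ sv (X - Z) j := by
  classical
  apply le_sv_of_subspace (X - Z) j (sv X i) (sv_nonneg X i)
    (Submodule.span ℝ (w X '' {l : Fin n | l ≤ i}) ⊓ LinearMap.ker Z.mulVecLin)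
  · have h1 : Module.finrank ℝ (Submodule.span ℝ (w X '' {l : Fin n | l ≤ i}))
        = (i : ℕ) + 1 := by
      rw [show {l : Fin n | l ≤ i} = ((Finset.univ.filter (fun l : Fin n => l ≤ i) : Finset (Fin n)) : Set (Fin n)) by ext l; simp,
        finrank_span_w]
      rw [show Finset.univ.filter (fun l : Fin n => l ≤ i) = Finset.Iic i by ext l; simp]
      exact Fin.card_Iic i
    have h2 : n - k ≤ Module.finrank ℝ (LinearMap.ker Z.mulVecLin) := by
      have := LinearMap.finrank_range_add_finrank_ker Z.mulVecLin
      rw [Module.finrank_fintype_fun_eq_card] at this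
      have hr : Module.finrank ℝ (LinearMap.range Z.mulVecLin) ≤ k := hZ
      simp only [Fintype.card_fin] at this
      omega
    have hsum := Submodule.finrank_sup_add_finrank_inf_eq
      (Submodule.span ℝ (w X '' {l : Fin n | l ≤ i})) (LinearMap.ker Z.mulVecLin)
    have htot : Module.finrank ℝ ↥((Submodule.span ℝ (w X '' {l : Fin n | l ≤ i}))
        ⊔ LinearMap.ker Z.mulVecLin) ≤ n := by
      have h := Submodule.finrank_le ((Submodule.span ℝ (w X '' {l : Fin n | l ≤ i}))
        ⊔ LinearMap.ker Z.mulVecLin)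
      rwa [Module.finrank_fintype_fun_eq_card, Fintype.card_fin] at h
    have hik : (i : ℕ) < n := i.isLt
    omega
  · intro v hv
    have hvs : v ∈ Submodule.span ℝ (w X '' {l : Fin n | l ≤ i}) := hv.1
    have hvk : Z *ᵥ v = 0 := hv.2
    have hWv : (X - Z) *ᵥ v = X *ᵥ v := by
      rw [Matrix.sub_mulVec, hvk, sub_zero]
    rw [hWv]
    exact quad_ge_on_span X i v hvs

/-- Tail sums of singular values are bounded by the nuclear norm of a
rank-`k` perturbation. -/
lemma tail_sum_le (Z : Matrix (Fin m) (Fin n) ℝ) (k : ℕ) (hZ : Z.rank ≤ k) :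
    ∑ i ∈ Finset.univ.filter (fun i : Fin n => k ≤ (i : ℕ)), sv X i
      ≤ ∑ j : Fin n, sv (X - Z) j := by
  classical
  have hT : True := trivial
  have hφlt : ∀ i ∈ Finset.univ.filter (fun i : Fin n => k ≤ (i : ℕ)), (i : ℕ) - k < n := fun i _ => lt_of_le_of_lt (Nat.sub_le _ _) i.isLt
  have step1 : ∑ i ∈ Finset.univ.filter (fun i : Fin n => k ≤ (i : ℕ)), sv X i ≤ ∑ i ∈ (Finset.univ.filter (fun i : Fin n => k ≤ (i : ℕ))).attach, sv (X - Z) ⟨(i : Fin n) - k, hφlt i i.2⟩ := by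
    rw [← Finset.sum_attach (Finset.univ.filter (fun i : Fin n => k ≤ (i : ℕ))) (fun i => sv X i)]
    refine Finset.sum_le_sum fun i _ => ?_
    have hik : k ≤ ((i : Fin n) : ℕ) := (Finset.mem_filter.mp i.2).2
    exact sv_shift_le X Z k hZ (i : Fin n) ⟨(i : Fin n) - k, hφlt i i.2⟩ (by simp; omega)
  refine step1.trans ?_
  have hinj : Set.InjOn (fun i : {x // x ∈ Finset.univ.filter (fun i : Fin n => k ≤ (i : ℕ))} => (⟨(i : Fin n) - k, hφlt i i.2⟩ : Fin n))
      Set.univ := by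
    intro i _ j _ hij
    have hik : k ≤ ((i : Fin n) : ℕ) := (Finset.mem_filter.mp i.2).2
    have hjk : k ≤ ((j : Fin n) : ℕ) := (Finset.mem_filter.mp j.2).2
    have : ((i : Fin n) : ℕ) - k = ((j : Fin n) : ℕ) - k := by
      simpa using congrArg (fun x : Fin n => (x : ℕ)) hij
    have : ((i : Fin n) : ℕ) = ((j : Fin n) : ℕ) := by omega
    exact Subtype.ext (Fin.ext this)
  calc ∑ i ∈ (Finset.univ.filter (fun i : Fin n => k ≤ (i : ℕ))).attach, sv (X - Z) ⟨(i : Fin n) - k, hφlt i i.2⟩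
      = ∑ j ∈ (Finset.univ.filter (fun i : Fin n => k ≤ (i : ℕ))).attach.image (fun i : {x // x ∈ Finset.univ.filter (fun i : Fin n => k ≤ (i : ℕ))} => (⟨(i : Fin n) - k, hφlt i i.2⟩ : Fin n)),
        sv (X - Z) j := by
        rw [Finset.sum_image]
        intro x hx y hy hxy
        exact hinj (Set.mem_univ x) (Set.mem_univ y) hxy
    _ ≤ ∑ j : Fin n, sv (X - Z) j := by
        refine Finset.sum_le_sum_of_subset_of_nonneg (Finset.subset_univ _) ?_
        intro j _ _
        exact sv_nonneg _ j

end CF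

section Abel

lemma abel_le (p : ℕ) (α xx ee : ℕ → ℝ) (h0 : 0 ≤ α 0) (hm : ∀ k, α k ≤ α (k + 1))
    (htail : ∀ k, ∑ i ∈ Finset.Ico k p, xx i ≤ ∑ i ∈ Finset.Ico k p, ee i) :
    ∑ i ∈ Finset.range p, α i * xx i ≤ ∑ i ∈ Finset.range p, α i * ee i := by
  classical
  set δ : ℕ → ℝ := fun i => ee i - xx i with hδ
  have hD : ∀ k, 0 ≤ ∑ i ∈ Finset.Ico k p, δ i := by
    intro k
    have := htail k
    rw [hδ]
    rw [Finset.sum_sub_distrib]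
    linarith
  have key : (0:ℝ) ≤ ∑ i ∈ Finset.range p, α i * δ i := by
    have hα : ∀ i, α i = α 0 + ∑ k ∈ Finset.range i, (α (k + 1) - α k) := by
      intro i
      rw [Finset.sum_range_sub (fun k => α k)]
      ring
    have expand : ∑ i ∈ Finset.range p, α i * δ i
        = α 0 * (∑ i ∈ Finset.Ico 0 p, δ i)
          + ∑ k ∈ Finset.range p, (α (k + 1) - α k) * ∑ i ∈ Finset.Ico (k + 1) p, δ i := by
      have h1 : ∀ i ∈ Finset.range p, α i * δ i
          = α 0 * δ i + ∑ k ∈ Finset.range p, (if k < i then (α (k + 1) - α k) * δ i else 0) := by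
        intro i hi
        rw [Finset.mem_range] at hi
        have h2 : ∑ k ∈ Finset.range p, (if k < i then (α (k + 1) - α k) * δ i else 0)
            = ∑ k ∈ (Finset.range p).filter (fun k => k < i), (α (k + 1) - α k) * δ i := by
          rw [Finset.sum_filter]
        have h3 : (Finset.range p).filter (fun k => k < i) = Finset.range i := by
          ext k
          simp only [Finset.mem_filter, Finset.mem_range]
          omega
        rw [h2, h3, ← Finset.sum_mul, hα i]
        ring
      rw [Finset.sum_congr rfl h1, Finset.sum_add_distrib, ← Finset.mul_sum]
      congr 1
      · rw [Finset.range_eq_Ico]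
      · rw [Finset.sum_comm]
        refine Finset.sum_congr rfl fun k _ => ?_
        have h4 : ∑ i ∈ Finset.range p, (if k < i then (α (k + 1) - α k) * δ i else 0)
            = ∑ i ∈ (Finset.range p).filter (fun i => k < i), (α (k + 1) - α k) * δ i := by
          rw [Finset.sum_filter]
        have h5 : (Finset.range p).filter (fun i => k < i) = Finset.Ico (k + 1) p := by
          ext i
          simp only [Finset.mem_filter, Finset.mem_range, Finset.mem_Ico]
          omega
        rw [h4, h5, Finset.mul_sum]
    rw [expand]
    have t1 : 0 ≤ α 0 * (∑ i ∈ Finset.Ico 0 p, δ i) := mul_nonneg h0 (hD 0)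
    have t2 : 0 ≤ ∑ k ∈ Finset.range p, (α (k + 1) - α k) * ∑ i ∈ Finset.Ico (k + 1) p, δ i :=
      Finset.sum_nonneg fun k _ => mul_nonneg (by linarith [hm k]) (hD (k + 1))
    linarith
  have : ∑ i ∈ Finset.range p, α i * δ i
      = ∑ i ∈ Finset.range p, α i * ee i - ∑ i ∈ Finset.range p, α i * xx i := by
    rw [← Finset.sum_sub_distrib]
    exact Finset.sum_congr rfl fun i _ => by rw [hδ]; ring
  linarith

end Abel

section Key

lemma svPad_nonneg (l : ℕ) : 0 ≤ svPad X l := by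
  rw [svPad]
  split
  · exact sv_nonneg X _
  · exact le_refl 0

lemma svPad_of_ge (l : ℕ) (h : n ≤ l) : svPad X l = 0 := dif_neg (by omega)

lemma svPad_tail_le (p k : ℕ) :
    ∑ i ∈ Finset.univ.filter (fun i : Fin p => k ≤ (i : ℕ)), svPad X (i : ℕ)
      ≤ ∑ i ∈ Finset.univ.filter (fun i : Fin n => k ≤ (i : ℕ)), sv X i := by
  classical
  set G : ℕ → ℝ := fun l => if k ≤ l then svPad X l else 0 with hG
  have hGnn : ∀ l, 0 ≤ G l := by
    intro l
    rw [hG]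
    dsimp only
    split
    · exact svPad_nonneg X l
    · exact le_refl 0
  have hL : ∑ i ∈ Finset.univ.filter (fun i : Fin p => k ≤ (i : ℕ)), svPad X (i : ℕ)
      = ∑ l ∈ Finset.range p, G l := by
    rw [Finset.sum_filter, Fin.sum_univ_eq_sum_range (fun l => if k ≤ l then svPad X l else 0) p]
  have hR : ∑ i ∈ Finset.univ.filter (fun i : Fin n => k ≤ (i : ℕ)), sv X i
      = ∑ l ∈ Finset.range n, G l := by
    rw [Finset.sum_filter]
    have hterm : ∀ i : Fin n, (if k ≤ (i : ℕ) then sv X i else 0) = G (i : ℕ) := by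
      intro i
      rw [hG]
      dsimp only
      rw [svPad, dif_pos i.isLt, Fin.eta]
    rw [Finset.sum_congr rfl fun i _ => hterm i, Fin.sum_univ_eq_sum_range G n]
  rw [hL, hR]
  rcases le_total p n with h | h
  · exact Finset.sum_le_sum_of_subset_of_nonneg (Finset.range_subset_range.mpr h)
      (fun l _ _ => hGnn l)
  · refine le_of_eq (sum_range_ext p n G ?_ ?_)
    · intro l hl
      rw [hG]
      dsimp only
      rw [svPad_of_ge X l (le_trans h hl)]
      simp
    · intro l hl
      rw [hG]
      dsimp only
      rw [svPad_of_ge X l hl]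
      simp

lemma sum_Ico_fin (p k : ℕ) (F : ℕ → ℝ) :
    ∑ l ∈ Finset.Ico k p, F l
      = ∑ i ∈ Finset.univ.filter (fun i : Fin p => k ≤ (i : ℕ)), F (i : ℕ) := by
  rw [Finset.sum_filter, Fin.sum_univ_eq_sum_range (fun l => if k ≤ l then F l else 0) p,
    ← Finset.sum_filter]
  congr 1
  ext l
  simp only [Finset.mem_filter, Finset.mem_range, Finset.mem_Ico]
  omega

lemma tails_claim {p : ℕ} (B : Matrix (Fin m) (Fin p) ℝ) (C : Matrix (Fin n) (Fin p) ℝ)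
    (d : Fin p → ℝ) (hd : ∀ j, d j = ((∑ kk, B kk j ^ 2) + ∑ kk, C kk j ^ 2) / 2)
    (π : Equiv.Perm (Fin p)) (k : ℕ) :
    ∑ i ∈ Finset.univ.filter (fun i : Fin p => k ≤ (i : ℕ)), svPad (B * Cᵀ) (i : ℕ)
      ≤ ∑ i ∈ Finset.univ.filter (fun i : Fin p => k ≤ (i : ℕ)), d (π i) := by
  classical
  set S : Finset (Fin p) := (Finset.univ.filter (fun i : Fin p => k ≤ (i : ℕ))).image π with hS
  have hcard_compl : (Finset.univ \ S).card ≤ k := by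
    have h1 : S.card = (Finset.univ.filter (fun i : Fin p => k ≤ (i : ℕ))).card := by
      rw [hS, Finset.card_image_of_injective _ π.injective]
    have h2 : (Finset.univ.filter (fun i : Fin p => ¬ k ≤ (i : ℕ))).card ≤ k := by
      have : (Finset.univ.filter (fun i : Fin p => ¬ k ≤ (i : ℕ))).card
          ≤ (Finset.range k).card := by
        apply Finset.card_le_card_of_injOn (fun i : Fin p => (i : ℕ))
        · intro i hi
          simp only [Finset.mem_filter, Finset.mem_univ, true_and, not_le] at hi
          simpa using hi
        · intro i _ j _ h
          exact Fin.ext h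
      simpa using this
    have h3 := Finset.card_filter_add_card_filter_not
      (s := (Finset.univ : Finset (Fin p))) (p := fun i : Fin p => k ≤ (i : ℕ))
    have h4 : (Finset.univ \ S).card = Fintype.card (Fin p) - S.card := by
      rw [Finset.card_sdiff_of_subset (Finset.subset_univ S), Finset.card_univ]
    simp only [Finset.card_univ, Fintype.card_fin] at h3 h4
    omega
  set Z : Matrix (Fin m) (Fin n) ℝ :=
    Matrix.of (fun x y => ∑ j ∈ Finset.univ \ S, B x j * C y j) with hZ
  have hZrank : Z.rank ≤ k := by
    have hZeq : Z = (Matrix.of (fun x (l : Fin (Finset.univ \ S).card) =>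
          B x (((Finset.univ \ S).orderIsoOfFin rfl l : Fin p)))) *
        (Matrix.of (fun y (l : Fin (Finset.univ \ S).card) =>
          C y (((Finset.univ \ S).orderIsoOfFin rfl l : Fin p))))ᵀ := by
      funext x y
      rw [Matrix.mul_apply]
      simp only [Matrix.transpose_apply, Matrix.of_apply]
      rw [show Z x y = ∑ j ∈ Finset.univ \ S, B x j * C y j from rfl]
      refine (Finset.sum_bij
        (fun (l : Fin (Finset.univ \ S).card) (_ : l ∈ Finset.univ) =>
          (((Finset.univ \ S).orderIsoOfFin rfl l : Fin p))) ?_ ?_ ?_ ?_).symm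
      · intro l _
        exact ((Finset.univ \ S).orderIsoOfFin rfl l).2
      · intro l1 _ l2 _ h
        exact ((Finset.univ \ S).orderIsoOfFin rfl).injective (Subtype.ext h)
      · intro j hj
        exact ⟨((Finset.univ \ S).orderIsoOfFin rfl).symm ⟨j, hj⟩, Finset.mem_univ _, by simp⟩
      · intro l _
        rfl
    rw [hZeq]
    have t1 := Matrix.rank_mul_le_left
      (Matrix.of (fun x (l : Fin (Finset.univ \ S).card) =>
        B x (((Finset.univ \ S).orderIsoOfFin rfl l : Fin p))))
      ((Matrix.of (fun y (l : Fin (Finset.univ \ S).card) =>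
        C y (((Finset.univ \ S).orderIsoOfFin rfl l : Fin p))))ᵀ)
    have t2 := Matrix.rank_le_card_width
      (Matrix.of (fun x (l : Fin (Finset.univ \ S).card) =>
        B x (((Finset.univ \ S).orderIsoOfFin rfl l : Fin p))))
    rw [Fintype.card_fin] at t2
    omega
  set Bs : Matrix (Fin m) (Fin p) ℝ :=
    Matrix.of (fun x j => if j ∈ S then B x j else 0) with hBs
  set Cs : Matrix (Fin n) (Fin p) ℝ :=
    Matrix.of (fun y j => if j ∈ S then C y j else 0) with hCs
  have hXZ : B * Cᵀ - Z = Bs * Csᵀ := by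
    funext x y
    have h5 : (B * Cᵀ) x y = ∑ j, B x j * C y j := by
      rw [Matrix.mul_apply]
      exact Finset.sum_congr rfl fun j _ => rfl
    have h6 : (Bs * Csᵀ) x y = ∑ j ∈ S, B x j * C y j := by
      rw [Matrix.mul_apply]
      have : ∀ j : Fin p, Bs x j * Csᵀ j y = if j ∈ S then B x j * C y j else 0 := by
        intro j
        simp only [Matrix.transpose_apply, hBs, hCs, Matrix.of_apply]
        by_cases hj : j ∈ S
        · rw [if_pos hj, if_pos hj, if_pos hj]
        · rw [if_neg hj, if_neg hj, if_neg hj, zero_mul]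
      rw [Finset.sum_congr rfl fun j _ => this j, Finset.sum_ite_mem, Finset.univ_inter]
    have h7 : Z x y = ∑ j ∈ Finset.univ \ S, B x j * C y j := rfl
    have h8 := Finset.sum_sdiff (Finset.subset_univ S)
      (f := fun j : Fin p => B x j * C y j)
    have h9 : (B * Cᵀ - Z) x y = (B * Cᵀ) x y - Z x y := rfl
    rw [h9, h5, h6, h7, ← h8]
    ring
  calc ∑ i ∈ Finset.univ.filter (fun i : Fin p => k ≤ (i : ℕ)), svPad (B * Cᵀ) (i : ℕ)
      ≤ ∑ i ∈ Finset.univ.filter (fun i : Fin n => k ≤ (i : ℕ)), sv (B * Cᵀ) i :=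
        svPad_tail_le (B * Cᵀ) p k
    _ ≤ ∑ j : Fin n, sv (B * Cᵀ - Z) j := tail_sum_le (B * Cᵀ) Z k hZrank
    _ = ∑ j : Fin n, sv (Bs * Csᵀ) j := by rw [hXZ]
    _ ≤ ∑ j : Fin p, ((∑ kk, Bs kk j ^ 2) + ∑ kk, Cs kk j ^ 2) / 2 := nuclear_le_cols Bs Cs
    _ = ∑ j ∈ S, d j := by
        have : ∀ j : Fin p, ((∑ kk, Bs kk j ^ 2) + ∑ kk, Cs kk j ^ 2) / 2
            = if j ∈ S then d j else 0 := by
          intro j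
          by_cases hj : j ∈ S
          · rw [if_pos hj, hd j]
            congr 2
            · exact Finset.sum_congr rfl fun kk _ => by
                simp only [hBs, Matrix.of_apply, if_pos hj]
            · exact Finset.sum_congr rfl fun kk _ => by
                simp only [hCs, Matrix.of_apply, if_pos hj]
          · rw [if_neg hj]
            have hb : ∀ kk, Bs kk j = 0 := fun kk => by
              simp only [hBs, Matrix.of_apply, if_neg hj]
            have hc : ∀ kk, Cs kk j = 0 := fun kk => by
              simp only [hCs, Matrix.of_apply, if_neg hj]
            simp [hb, hc]
        rw [Finset.sum_congr rfl fun j _ => this j, Finset.sum_ite_mem, Finset.univ_inter]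
    _ = ∑ i ∈ Finset.univ.filter (fun i : Fin p => k ≤ (i : ℕ)), d (π i) := by
        rw [hS, Finset.sum_image (fun x _ y _ h => π.injective h)]

/-- The key inequality for direction 2. -/
lemma key_ineq {p : ℕ} (a : Fin p → ℝ) (ha0 : ∀ i, 0 ≤ a i) (haM : Monotone a)
    (B : Matrix (Fin m) (Fin p) ℝ) (C : Matrix (Fin n) (Fin p) ℝ) :
    ∑ i : Fin p, a i * svPad (B * Cᵀ) (i : ℕ)
      ≤ ∑ i : Fin p, a i * (((∑ j, B j i ^ 2) + ∑ j, C j i ^ 2) / 2) := by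
  classical
  rcases Nat.eq_zero_or_pos p with hp | hp
  · subst hp
    simp
  set d : Fin p → ℝ := fun j => ((∑ kk, B kk j ^ 2) + ∑ kk, C kk j ^ 2) / 2 with hd
  set π : Equiv.Perm (Fin p) := Tuple.sort (fun j => -d j) with hπ
  have he_anti : Antitone (fun i => d (π i)) := by
    have h := Tuple.monotone_sort (fun j => -d j)
    intro i j hij
    have h2 := h hij
    simp only [Function.comp_apply] at h2
    have h3 : -(d (π i)) ≤ -(d (π j)) := h2
    linarith
  have stepA : ∑ i, a i * d (π i) ≤ ∑ i, a i * d i := by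
    have hAv : Antivary a (fun i => d (π i)) := by
      intro i j hij
      simp only at hij
      rcases le_or_gt j i with h | h
      · exact haM h
      · exact absurd hij (not_lt.mpr (he_anti h.le))
    have h4 := hAv.sum_mul_le_sum_mul_comp_perm (σ := π⁻¹)
    simp only [Equiv.Perm.inv_def, Equiv.apply_symm_apply] at h4
    exact h4
  set α : ℕ → ℝ := fun l => if h : l < p then a ⟨l, h⟩ else a ⟨p - 1, by omega⟩ with hα
  set xx : ℕ → ℝ := fun l => svPad (B * Cᵀ) l with hxx
  set ee : ℕ → ℝ := fun l => if h : l < p then d (π ⟨l, h⟩) else 0 with hee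
  have h0 : 0 ≤ α 0 := by
    rw [hα]
    dsimp only
    split
    · exact ha0 _
    · exact ha0 _
  have hm : ∀ l, α l ≤ α (l + 1) := by
    intro l
    rw [hα]
    dsimp only
    by_cases h1 : l < p
    · by_cases h2 : l + 1 < p
      · rw [dif_pos h1, dif_pos h2]
        exact haM (by rw [Fin.mk_le_mk]; omega)
      · rw [dif_pos h1, dif_neg h2]
        exact haM (by rw [Fin.mk_le_mk]; omega)
    · rw [dif_neg h1, dif_neg (by omega)]
  have htail : ∀ k, ∑ l ∈ Finset.Ico k p, xx l ≤ ∑ l ∈ Finset.Ico k p, ee l := by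
    intro k
    rw [sum_Ico_fin p k xx, sum_Ico_fin p k ee]
    have hx1 : ∀ i : Fin p, xx (i : ℕ) = svPad (B * Cᵀ) (i : ℕ) := fun i => rfl
    have he1 : ∀ i : Fin p, ee (i : ℕ) = d (π i) := by
      intro i
      rw [hee]
      dsimp only
      rw [dif_pos i.isLt, Fin.eta]
    rw [Finset.sum_congr rfl fun i _ => hx1 i, Finset.sum_congr rfl fun i _ => he1 i]
    exact tails_claim B C d (fun j => rfl) π k
  have hL : ∑ i : Fin p, a i * svPad (B * Cᵀ) (i : ℕ)
      = ∑ l ∈ Finset.range p, α l * xx l := by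
    have : ∀ i : Fin p, a i * svPad (B * Cᵀ) (i : ℕ) = α (i : ℕ) * xx (i : ℕ) := by
      intro i
      rw [hα]
      dsimp only
      rw [dif_pos i.isLt, Fin.eta]
    rw [Finset.sum_congr rfl fun i _ => this i,
      Fin.sum_univ_eq_sum_range (fun l => α l * xx l) p]
  have hE : ∑ l ∈ Finset.range p, α l * ee l = ∑ i, a i * d (π i) := by
    have : ∀ i : Fin p, α (i : ℕ) * ee (i : ℕ) = a i * d (π i) := by
      intro i
      rw [hα, hee]
      dsimp only
      rw [dif_pos i.isLt, dif_pos i.isLt, Fin.eta]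
    rw [← Fin.sum_univ_eq_sum_range (fun l => α l * ee l) p,
      Finset.sum_congr rfl fun i _ => this i]
  calc ∑ i : Fin p, a i * svPad (B * Cᵀ) (i : ℕ)
      = ∑ l ∈ Finset.range p, α l * xx l := hL
    _ ≤ ∑ l ∈ Finset.range p, α l * ee l := abel_le p α xx ee h0 hm htail
    _ = ∑ i, a i * d (π i) := hE
    _ ≤ ∑ i, a i * d i := stepA
    _ = ∑ i : Fin p, a i * (((∑ j, B j i ^ 2) + ∑ j, C j i ^ 2) / 2) := by
        refine Finset.sum_congr rfl fun i _ => ?_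
        rw [hd]

end Key

end SVDAux

open SVDAux

/-- For nonnegative non-decreasing weights a, minimizing the bilinear
parameterization Σᵢ aᵢ(‖Bᵢ‖²+‖Cᵢ‖²)/2 + ‖𝒜(BCᵀ) − b‖² is equivalent to
minimizing the weighted nuclear norm problem Σᵢ aᵢσᵢ(X) + ‖𝒜X − b‖² over
matrices X of rank at most p. -/
theorem bilinear_eq_weighted_nuclear_norm_problem {m n p q : ℕ}
    (a : Fin p → ℝ) (ha0 : ∀ i, 0 ≤ a i) (haM : Monotone a)
    (A : Matrix (Fin m) (Fin n) ℝ →ₗ[ℝ] (Fin q → ℝ)) (b : Fin q → ℝ) :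
    sInf {y : ℝ | ∃ (B : Matrix (Fin m) (Fin p) ℝ) (C : Matrix (Fin n) (Fin p) ℝ),
        y = ∑ i, a i * ((∑ j, B j i ^ 2) + ∑ j, C j i ^ 2) / 2 +
          ∑ k, (A (B * Cᵀ) k - b k) ^ 2} =
    sInf {y : ℝ | ∃ X : Matrix (Fin m) (Fin n) ℝ, X.rank ≤ p ∧
        y = ∑ i : Fin p, a i * svPad X (i : ℕ) +
          ∑ k, (A X k - b k) ^ 2} := by
  classical
  set S1 := {y : ℝ | ∃ (B : Matrix (Fin m) (Fin p) ℝ) (C : Matrix (Fin n) (Fin p) ℝ),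
      y = ∑ i, a i * ((∑ j, B j i ^ 2) + ∑ j, C j i ^ 2) / 2 +
        ∑ k, (A (B * Cᵀ) k - b k) ^ 2} with hS1
  set S2 := {y : ℝ | ∃ X : Matrix (Fin m) (Fin n) ℝ, X.rank ≤ p ∧
      y = ∑ i : Fin p, a i * svPad X (i : ℕ) + ∑ k, (A X k - b k) ^ 2} with hS2
  have hS1ne : S1.Nonempty := ⟨_, 0, 0, rfl⟩
  have hS2ne : S2.Nonempty := by
    refine ⟨_, 0, ?_, rfl⟩
    rw [Matrix.rank_zero]
    exact Nat.zero_le p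
  have hbdd1 : BddBelow S1 := by
    refine ⟨0, fun y hy => ?_⟩
    obtain ⟨B, C, rfl⟩ := hy
    have h1 : (0:ℝ) ≤ ∑ i, a i * ((∑ j, B j i ^ 2) + ∑ j, C j i ^ 2) / 2 :=
      Finset.sum_nonneg fun i _ => by
        have hb : (0:ℝ) ≤ ∑ j, B j i ^ 2 := Finset.sum_nonneg fun j _ => sq_nonneg _
        have hc : (0:ℝ) ≤ ∑ j, C j i ^ 2 := Finset.sum_nonneg fun j _ => sq_nonneg _
        have := ha0 i
        positivity
    have h2 : (0:ℝ) ≤ ∑ k, (A (B * Cᵀ) k - b k) ^ 2 :=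
      Finset.sum_nonneg fun k _ => sq_nonneg _
    linarith
  have hbdd2 : BddBelow S2 := by
    refine ⟨0, fun y hy => ?_⟩
    obtain ⟨X, _, rfl⟩ := hy
    have h1 : (0:ℝ) ≤ ∑ i : Fin p, a i * svPad X (i : ℕ) :=
      Finset.sum_nonneg fun i _ => mul_nonneg (ha0 i) (svPad_nonneg X _)
    have h2 : (0:ℝ) ≤ ∑ k, (A X k - b k) ^ 2 :=
      Finset.sum_nonneg fun k _ => sq_nonneg _
    linarith
  have hsub : S2 ⊆ S1 := by
    rintro y ⟨X, hrank, rfl⟩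
    obtain ⟨B, C, hBC, hBcol, hCcol⟩ := exists_factorization X hrank
    refine ⟨B, C, ?_⟩
    rw [hBC]
    congr 1
    refine Finset.sum_congr rfl fun i _ => ?_
    rw [hBcol i, hCcol i]
    ring
  apply le_antisymm
  · exact csInf_le_csInf hbdd1 hS2ne hsub
  · refine le_csInf hS1ne fun y hy => ?_
    obtain ⟨B, C, rfl⟩ := hy
    have hrank : (B * Cᵀ).rank ≤ p := by
      have t1 := Matrix.rank_mul_le_left B Cᵀ
      have t2 := Matrix.rank_le_card_width B
      rw [Fintype.card_fin] at t2
      omega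
    have hmem : (∑ i : Fin p, a i * svPad (B * Cᵀ) (i : ℕ) + ∑ k, (A (B * Cᵀ) k - b k) ^ 2)
        ∈ S2 := ⟨B * Cᵀ, hrank, rfl⟩
    refine le_trans (csInf_le hbdd2 hmem) ?_
    have hkey := key_ineq a ha0 haM B C
    have : ∑ i, a i * ((∑ j, B j i ^ 2) + ∑ j, C j i ^ 2) / 2
        = ∑ i, a i * (((∑ j, B j i ^ 2) + ∑ j, C j i ^ 2) / 2) :=
      Finset.sum_congr rfl fun i _ => by ring
    linarith
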